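/- For every n ≥ 0, the number of sequences (s_1,…,s_{2n}) ∈ {−1,+1}^{2n} such that ∑_{i=1}^k s_i ≥ 0 for all 1 ≤ k ≤ 2n equals (2n choose n). -/

import Mathlib

open Finset

namespace BallotAux

/-- partial sum of first `k` entries -/
def psum (m : ℕ) (s : Fin m → ℤˣ) (k : ℕ) : ℤ :=
  ∑ i ∈ univ.filter (fun i : Fin m => (i : ℕ) < k), (s i : ℤ)

lemma psum_zero (m : ℕ) (s : Fin m → ℤˣ) : psum m s 0 = 0 := by
  simp [psum]

lemma psum_snoc (m : ℕ) (s : Fin m → ℤˣ) (x : ℤˣ) {k : ℕ} (hk : k ≤ m) :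
    psum (m + 1) (Fin.snoc s x) k = psum m s k := by
  unfold psum
  rw [Finset.sum_filter, Finset.sum_filter, Fin.sum_univ_castSucc]
  simp only [Fin.coe_castSucc, Fin.snoc_castSucc, Fin.snoc_last, Fin.val_last]
  rw [if_neg (by omega)]
  simp

lemma psum_snoc_last (m : ℕ) (s : Fin m → ℤˣ) (x : ℤˣ) :
    psum (m + 1) (Fin.snoc s x) (m + 1) = psum m s m + x := by
  unfold psum
  rw [Finset.sum_filter, Finset.sum_filter, Fin.sum_univ_castSucc]
  simp only [Fin.coe_castSucc, Fin.snoc_castSucc, Fin.snoc_last, Fin.val_last]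
  rw [if_pos (by omega)]
  congr 1
  apply Finset.sum_congr rfl
  intro i _
  rw [if_pos (by omega), if_pos i.isLt]

noncomputable def c (m : ℕ) (h : ℤ) : ℕ :=
  Nat.card {s : Fin m → ℤˣ // (∀ k ≤ m, 0 ≤ psum m s k) ∧ psum m s m = h}

lemma c_zero (h : ℤ) : c 0 h = if h = 0 then 1 else 0 := by
  unfold c
  split_ifs with hh
  · subst hh
    rw [Nat.card_eq_one_iff_unique]
    constructor
    · constructor
      intro a b
      apply Subtype.ext
      funext i; exact absurd i.isLt (by omega)
    · exact ⟨⟨fun i => 1, by simp [psum_zero], by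
        have : (0:ℕ) ≤ 0 := le_refl 0
        simpa using (psum_zero 0 (fun _ => 1))⟩⟩
  · rw [Nat.card_eq_zero]
    left
    rw [isEmpty_subtype]
    intro s
    rintro ⟨-, h2⟩
    exact hh (by rw [← h2, psum_zero])

lemma c_neg {m : ℕ} {h : ℤ} (hh : h < 0) : c m h = 0 := by
  rw [c, Nat.card_eq_zero]
  left
  rw [isEmpty_subtype]
  rintro s ⟨h1, h2⟩
  have := h1 m le_rfl
  omega

lemma card_split {α β : Type*} [Fintype α] (P : α → Prop) (g : α → β) (T : Finset β)
    (hg : ∀ a, P a → g a ∈ T) :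
    Nat.card {a // P a} = ∑ b ∈ T, Nat.card {a // P a ∧ g a = b} := by
  classical
  simp_rw [Nat.card_eq_fintype_card, Fintype.card_subtype]
  rw [Finset.card_eq_sum_card_fiberwise (f := g) (t := T)
    (fun a ha => hg a (Finset.mem_filter.mp ha).2)]
  apply Finset.sum_congr rfl
  intro b _
  rw [Finset.filter_filter]

end BallotAux

namespace BallotAuxB
open BallotAux

section
variable (m : ℕ) (h : ℤ) (x : ℤˣ)

def fiberEquiv (hh : 0 ≤ h) :
    {s : Fin (m+1) → ℤˣ //
        ((∀ k ≤ m+1, 0 ≤ psum (m+1) s k) ∧ psum (m+1) s (m+1) = h) ∧ s (Fin.last m) = x} ≃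
    {q : Fin m → ℤˣ // (∀ k ≤ m, 0 ≤ psum m q k) ∧ psum m q m = h - x} where
  toFun s := ⟨fun i => s.1 i.castSucc, by
    obtain ⟨s, ⟨h1, h2⟩, h3⟩ := s
    dsimp only
    have hs : s = Fin.snoc (fun i => s i.castSucc) x := by
      funext i
      induction i using Fin.lastCases with
      | last => simpa using h3
      | cast i => simp
    constructor
    · intro k hk
      have := h1 k (by omega)
      rwa [hs, psum_snoc _ _ _ hk] at this
    · rw [hs, psum_snoc_last] at h2
      omega⟩
  invFun q := ⟨Fin.snoc q.1 x, by
    obtain ⟨q, h1, h2⟩ := q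
    refine ⟨⟨?_, ?_⟩, by simp⟩
    · intro k hk
      rcases Nat.lt_or_ge k (m+1) with hk' | hk'
      · rw [psum_snoc _ _ _ (by omega)]
        exact h1 k (by omega)
      · have : k = m + 1 := by omega
        subst this
        rw [psum_snoc_last, h2]
        omega
    · rw [psum_snoc_last, h2]; ring⟩
  left_inv s := by
    obtain ⟨s, ⟨h1, h2⟩, h3⟩ := s
    apply Subtype.ext
    funext i
    induction i using Fin.lastCases with
    | last => simpa using h3.symm
    | cast i => simp
  right_inv q := by
    apply Subtype.ext
    funext i
    simp

end

lemma int_units_univ : (univ : Finset ℤˣ) = {1, -1} := by decide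

lemma c_succ (m : ℕ) {h : ℤ} (hh : 0 ≤ h) : c (m+1) h = c m (h-1) + c m (h+1) := by
  unfold c
  rw [card_split _ (fun s => s (Fin.last m)) (univ : Finset ℤˣ) (fun _ _ => mem_univ _)]
  rw [int_units_univ, Finset.sum_insert (by decide), Finset.sum_singleton]
  rw [Nat.card_congr (fiberEquiv m h 1 hh), Nat.card_congr (fiberEquiv m h (-1) hh)]
  simp only [Units.val_one, Units.val_neg, sub_neg_eq_add]

end BallotAuxB
namespace BallotAuxC
open BallotAux BallotAuxB

def C' (m : ℕ) (j : ℤ) : ℤ := if 0 ≤ j then m.choose j.toNat else 0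

lemma pascal (m : ℕ) (j : ℤ) : C' (m+1) j = C' m j + C' m (j-1) := by
  unfold C'
  rcases lt_trichotomy j 0 with hj | hj | hj
  · rw [if_neg (by omega), if_neg (by omega), if_neg (by omega)]; ring
  · subst hj; norm_num
  · rw [if_pos (by omega), if_pos (by omega), if_pos (by omega)]
    obtain ⟨t, rfl⟩ : ∃ t : ℕ, j = (t : ℤ) + 1 := ⟨(j-1).toNat, by omega⟩
    have h1 : ((t:ℤ) + 1).toNat = t + 1 := by omega
    have h2 : ((t:ℤ) + 1 - 1).toNat = t := by omega
    rw [h1, h2, Nat.choose_succ_succ]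
    push_cast; ring

lemma c_formula : ∀ m : ℕ, ∀ j : ℤ, 2*j ≤ (m:ℤ) + 1 →
    (c m ((m:ℤ) - 2*j) : ℤ) = C' m j - C' m (j-1) := by
  intro m
  induction m with
  | zero =>
    intro j hj
    rcases eq_or_ne j 0 with rfl | hne
    · simp [c_zero, C']
    · have hj0 : j < 0 := by omega
      rw [c_zero, if_neg (by omega)]
      unfold C'
      rw [if_neg (by omega), if_neg (by omega)]
      norm_num
  | succ m ih =>
    intro j hj
    have hcast : ((m+1:ℕ):ℤ) - 2*j = (m:ℤ) + 1 - 2*j := by push_cast; ring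
    rcases lt_or_ge ((m:ℤ) + 1 - 2*j) 0 with hneg | hpos
    · have h2j : 2*j = (m:ℤ) + 2 := by omega
      rw [hcast, c_neg hneg]
      have hj1 : 1 ≤ j := by omega
      unfold C'
      rw [if_pos (by omega), if_pos (by omega)]
      obtain ⟨a, ha⟩ : ∃ a : ℕ, (a:ℤ) = j := ⟨j.toNat, by omega⟩
      have h2a : 2*a = m + 2 := by omega
      have hta : j.toNat = a := by omega
      have htb : (j-1).toNat = a - 1 := by omega
      rw [hta, htb]
      have hsym : (m+1).choose (a-1) = (m+1).choose a := by
        have : m + 1 - a = a - 1 := by omega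
        rw [← this]
        exact Nat.choose_symm (by omega)
      rw [hsym]
      push_cast; ring
    · have hc := c_succ m (h := (m:ℤ) + 1 - 2*j) hpos
      rw [hcast, hc]
      have e1 : (m:ℤ) + 1 - 2*j - 1 = (m:ℤ) - 2*j := by ring
      have e2 : (m:ℤ) + 1 - 2*j + 1 = (m:ℤ) - 2*(j-1) := by ring
      rw [e1, e2]
      push_cast
      rw [ih j (by omega), ih (j-1) (by omega)]
      rw [pascal, pascal]
      ring

lemma filter_lt_self (m : ℕ) :
    (univ.filter (fun i : Fin m => (i:ℕ) < m)) = univ :=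
  filter_true_of_mem (fun i _ => i.isLt)

lemma psum_self_le (m : ℕ) (s : Fin m → ℤˣ) : psum m s m ≤ m := by
  unfold psum
  rw [filter_lt_self]
  calc ∑ i, (s i : ℤ) ≤ ∑ _i : Fin m, (1:ℤ) :=
        Finset.sum_le_sum (fun i _ => by
          rcases Int.units_eq_one_or (s i) with h | h <;> simp [h])
    _ = m := by simp

lemma even_sub_psum (m : ℕ) (s : Fin m → ℤˣ) : Even ((m:ℤ) - psum m s m) := by
  unfold psum
  rw [filter_lt_self]
  have : (m:ℤ) - ∑ i, (s i : ℤ) = ∑ i : Fin m, (1 - (s i : ℤ)) := by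
    rw [Finset.sum_sub_distrib]; simp
  rw [this]
  refine Finset.even_sum _ (fun i _ => ?_)
  rcases Int.units_eq_one_or (s i) with h | h
  · simp [h]
  · rw [h]; exact ⟨1, by norm_num⟩

end BallotAuxC
open BallotAux BallotAuxB BallotAuxC

/-- The number of `±1`-sequences of length `2n` all of whose partial sums are
non-negative is `(2n choose n)`.  (Signs are encoded as units of `ℤ`, i.e. `{-1, +1}`.) -/
theorem card_nonneg_partial_sum_sign_sequences (n : ℕ) :
    Nat.card {s : Fin (2 * n) → ℤˣ //
        ∀ k : ℕ, 1 ≤ k → k ≤ 2 * n →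
          0 ≤ ∑ i ∈ univ.filter (fun i : Fin (2 * n) => (i : ℕ) < k), (s i : ℤ)} =
      Nat.choose (2 * n) n := by
  have e : {s : Fin (2 * n) → ℤˣ //
        ∀ k : ℕ, 1 ≤ k → k ≤ 2 * n →
          0 ≤ ∑ i ∈ univ.filter (fun i : Fin (2 * n) => (i : ℕ) < k), (s i : ℤ)} ≃
      {s : Fin (2 * n) → ℤˣ // ∀ k ≤ 2 * n, 0 ≤ psum (2 * n) s k} :=
    Equiv.subtypeEquivRight (fun s => by
      constructor
      · intro hs k hk
        rcases Nat.eq_zero_or_pos k with rfl | h1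
        · rw [psum_zero]
        · exact hs k h1 hk
      · intro hs k h1 hk
        exact hs k hk)
  rw [Nat.card_congr e]
  rw [card_split _ (fun s => psum (2 * n) s (2 * n))
      ((range (n + 1)).image (fun j : ℕ => (2 * n : ℤ) - 2 * j))
      (fun s hs => by
        have hle := psum_self_le (2 * n) s
        have hev := even_sub_psum (2 * n) s
        have h0 := hs (2 * n) le_rfl
        simp only [mem_image, mem_range]
        revert hle hev h0
        generalize psum (2 * n) s (2 * n) = p
        intro hle hev h0
        obtain ⟨t, ht⟩ := hev
        exact ⟨t.toNat, by omega, by omega⟩)]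
  rw [Finset.sum_image (fun x _ y _ hxy => by omega)]
  have key : (∑ j ∈ range (n + 1),
      (Nat.card {s : Fin (2 * n) → ℤˣ //
        (∀ k ≤ 2 * n, 0 ≤ psum (2 * n) s k) ∧
          psum (2 * n) s (2 * n) = (2 * n : ℤ) - 2 * j} : ℤ)) = ((2 * n).choose n : ℤ) := by
    have step : ∀ j ∈ range (n + 1),
        (Nat.card {s : Fin (2 * n) → ℤˣ //
          (∀ k ≤ 2 * n, 0 ≤ psum (2 * n) s k) ∧
            psum (2 * n) s (2 * n) = (2 * n : ℤ) - 2 * j} : ℤ) =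
        C' (2 * n) ((j : ℤ) + 1 - 1) - C' (2 * n) ((j : ℤ) - 1) := by
      intro j hj
      have hj' : j < n + 1 := mem_range.mp hj
      have := c_formula (2 * n) j (by push_cast; omega)
      rw [show ((2 * n : ℕ) : ℤ) = (2 * n : ℤ) by push_cast; ring] at this
      rw [show ((j : ℤ) + 1 - 1) = (j : ℤ) by ring]
      exact this
    rw [Finset.sum_congr rfl step]
    have := Finset.sum_range_sub (fun j : ℕ => C' (2 * n) ((j : ℤ) - 1)) (n + 1)
    rw [show (∑ j ∈ range (n + 1),
        (C' (2 * n) ((j : ℤ) + 1 - 1) - C' (2 * n) ((j : ℤ) - 1)))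
        = ∑ j ∈ range (n + 1), ((fun j : ℕ => C' (2 * n) ((j : ℤ) - 1)) (j + 1)
          - (fun j : ℕ => C' (2 * n) ((j : ℤ) - 1)) j) by
      apply Finset.sum_congr rfl; intro j _; push_cast; ring_nf]
    rw [this]
    unfold C'
    rw [if_pos (by omega), if_neg (by omega)]
    have h3 : (((n + 1 : ℕ) : ℤ) - 1).toNat = n := by omega
    rw [h3]
    ring
  exact_mod_cast key
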